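/- Let (r_n) satisfy r_{n+1} = r_n + U(r̃_n) with r_1 ≥ 0, where U(r) ≥ c·e^{−αr} for some c > 0, and r̃_n is an increasing sequence with r̃_n ≤ α̃^{−1} log(K + 2Cα̃ n) for constants K, C > 0. If α̃ > α, then ∑_{n≥1} e^{−r_n} < ∞. -/

import Mathlib

open Filter

/-- If `r_{n+1} = r_n + U (rt_n)` with `r_1 ≥ 0`, where
`U x ≥ c·e^{−α x}` (`c > 0`) and `rt` is increasing with
`rt_n ≤ αt⁻¹ log(K + 2·C·αt·n)` (`K, C > 0`), and `αt > α > 0`, then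
`∑_{n≥1} e^{−r_n} < ∞`. -/
theorem stmt17 (r rt : ℕ → ℝ) (U : ℝ → ℝ) (c C K α αt : ℝ)
    (hα : 0 < α) (hαt : α < αt) (hc : 0 < c) (hC : 0 < C) (hK : 0 < K)
    (hr1 : 0 ≤ r 1)
    (hrec : ∀ n : ℕ, 1 ≤ n → r (n + 1) = r n + U (rt n))
    (hU : ∀ x : ℝ, c * Real.exp (-α * x) ≤ U x)
    (hrtmono : Monotone rt)
    (hrtub : ∀ n : ℕ, 1 ≤ n → rt n ≤ αt⁻¹ * Real.log (K + 2 * C * αt * n)) :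
    Summable (fun n : ℕ => Real.exp (-(r (n + 1)))) := by
  have hαt0 : 0 < αt := hα.trans hαt
  set β : ℝ := α / αt with hβ
  have hβ0 : 0 < β := div_pos hα hαt0
  have hβ1 : β < 1 := (div_lt_one hαt0).2 hαt
  set γ : ℝ := 1 - β with hγ
  have hγ0 : 0 < γ := by simp [hγ]; linarith
  set D : ℝ := K + 2 * C * αt with hD
  have hD0 : 0 < D := by positivity
  set c' : ℝ := c * D ^ (-β) with hc'
  have hc'0 : 0 < c' := by positivity
  -- step 1: lower bound on r (n+1)
  have key : ∀ n : ℕ, 1 ≤ n → c' * (n : ℝ) ^ γ ≤ r (n + 1) := by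
    intro n hn
    -- each increment bound
    have hx : ∀ k : ℕ, 1 ≤ k → k ≤ n → c' * (n : ℝ) ^ (-β) ≤ U (rt k) := by
      intro k hk hkn
      have hxn : (0 : ℝ) < K + 2 * C * αt * n := by positivity
      have h1 : c * Real.exp (-α * rt n) ≤ U (rt k) := by
        refine le_trans ?_ (hU (rt k))
        have h := hrtmono hkn
        exact mul_le_mul_of_nonneg_left (Real.exp_le_exp.2 (by nlinarith)) hc.le
      refine le_trans ?_ h1
      have h2 : Real.exp (-α * rt n) ≥ (K + 2 * C * αt * n) ^ (-β) := by
        have h3 : -α * rt n ≥ -β * Real.log (K + 2 * C * αt * n) := by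
          have := hrtub n hn
          have : α * rt n ≤ α * (αt⁻¹ * Real.log (K + 2 * C * αt * n)) := by
            exact mul_le_mul_of_nonneg_left this hα.le
          rw [hβ]; rw [div_eq_mul_inv]
          nlinarith
        calc (K + 2 * C * αt * n) ^ (-β)
            = Real.exp (-β * Real.log (K + 2 * C * αt * n)) := by
              rw [Real.rpow_def_of_pos hxn, mul_comm]
          _ ≤ Real.exp (-α * rt n) := Real.exp_le_exp.2 h3
      refine le_trans ?_ (mul_le_mul_of_nonneg_left h2 hc.le)
      -- c' * n^(-β) ≤ c * (K + 2Cαt n)^(-β)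
      rw [hc']
      have hn1 : (1 : ℝ) ≤ (n : ℝ) := by exact_mod_cast hn
      have hnp : (0 : ℝ) < (n : ℝ) := by linarith
      have hle : K + 2 * C * αt * n ≤ D * n := by
        rw [hD]; nlinarith
      have h4 : (D * n) ^ (-β) ≤ (K + 2 * C * αt * n) ^ (-β) :=
        Real.rpow_le_rpow_of_nonpos (by positivity) hle (by linarith)
      have h5 : (D * (n:ℝ)) ^ (-β) = D ^ (-β) * (n:ℝ) ^ (-β) :=
        Real.mul_rpow hD0.le hnp.le
      calc c * D ^ (-β) * (n:ℝ) ^ (-β) = c * ((D * n) ^ (-β)) := by rw [h5]; ring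
        _ ≤ c * (K + 2 * C * αt * n) ^ (-β) := by gcongr
    -- telescope
    have tel : ∀ m : ℕ, 1 ≤ m → m ≤ n + 1 → (m - 1 : ℝ) * (c' * (n:ℝ) ^ (-β)) ≤ r m := by
      intro m hm
      induction m with
      | zero => omega
      | succ m ih =>
        intro hmn
        rcases Nat.eq_or_lt_of_le hm with h1 | h1
        · simp [← h1]; linarith
        · have hm1 : 1 ≤ m := by omega
          have := ih hm1 (by omega)
          rw [hrec m hm1]
          have := hx m hm1 (by omega)
          push_cast
          linarith
    have := tel (n+1) (by omega) le_rfl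
    have hnp : (0 : ℝ) < (n : ℝ) := by exact_mod_cast hn
    have : (n : ℝ) * (c' * (n:ℝ) ^ (-β)) ≤ r (n+1) := by
      push_cast at this; linarith
    refine le_trans (le_of_eq ?_) this
    rw [hγ, sub_eq_add_neg, Real.rpow_add hnp, Real.rpow_one]; ring
  -- step 2: comparison
  have hsum : Summable (fun n : ℕ => (n : ℝ) ^ (-2 : ℝ)) :=
    Real.summable_nat_rpow.2 (by norm_num)
  refine summable_of_isBigO_nat hsum (Asymptotics.IsBigO.of_bound 1 ?_)
  have hev : ∀ᶠ x : ℝ in atTop, ‖Real.log x‖ ≤ c' / 2 * ‖x ^ γ‖ :=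
    (isLittleO_log_rpow_atTop hγ0).def (by positivity)
  have hev2 : ∀ᶠ n : ℕ in atTop, ‖Real.log (n:ℝ)‖ ≤ c' / 2 * ‖(n:ℝ) ^ γ‖ :=
    tendsto_natCast_atTop_atTop.eventually hev
  filter_upwards [hev2, eventually_ge_atTop 1] with n hlog hn
  have hnp : (0 : ℝ) < (n : ℝ) := by exact_mod_cast hn
  have hrb := key n hn
  have hlog' : 2 * Real.log n ≤ c' * (n:ℝ) ^ γ := by
    rw [Real.norm_eq_abs, Real.norm_eq_abs] at hlog
    have h1 : Real.log n ≤ |Real.log n| := le_abs_self _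
    have h2 : |(n:ℝ) ^ γ| = (n:ℝ) ^ γ := abs_of_nonneg (Real.rpow_nonneg hnp.le _)
    rw [h2] at hlog
    linarith
  have : Real.exp (-(r (n+1))) ≤ (n:ℝ) ^ (-2 : ℝ) := by
    rw [Real.rpow_def_of_pos hnp]
    exact Real.exp_le_exp.2 (by linarith)
  simpa [abs_of_nonneg (Real.exp_nonneg _), abs_of_nonneg (Real.rpow_nonneg hnp.le (-2:ℝ)),
    Real.norm_eq_abs] using this.trans (le_of_eq (by rw [Real.rpow_neg hnp.le, Real.rpow_two]))
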